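/- arXiv:2103.12444 — 2 statements merged into one kernel-verified Lean document; each statement's English description precedes it below -/
import Mathlib

section
/- Fix a sparse order k ≥ 1 for the CPOP. The sequence (ρ^ts_{d,k})_{d≥d_min} of optima of the term-sparsity-adapted complex moment relaxations is monotone nondecreasing in the relaxation order d. -/
open scoped BigOperators ComplexOrder

attribute [local instance] Classical.propDecidable

noncomputable section

/-- Exponent tuples `ℕ^n`. -/
abbrev Exp (n : ℕ) := Fin n → ℕ

/-- A complex polynomial in `z, z̄` that is real-valued (Hermitian), represented by its
coefficients `f_{β,γ}` (of the monomial `z^β z̄^γ`). -/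
structure CPoly (n : ℕ) where
  coeff : Exp n × Exp n → ℂ
  finite_support : (Function.support coeff).Finite
  herm : ∀ p : Exp n × Exp n, coeff (p.2, p.1) = star (coeff p)

namespace CPoly

variable {n : ℕ}

/-- The support of a polynomial. -/
def supp (f : CPoly n) : Set (Exp n × Exp n) := Function.support f.coeff

/-- The (total) degree of a polynomial. -/
def deg (f : CPoly n) : ℕ :=
  sSup ((fun p : Exp n × Exp n => (∑ i, p.1 i) + ∑ i, p.2 i) '' f.supp)

/-- `⌈deg f / 2⌉`. -/
def halfDeg (f : CPoly n) : ℕ := (f.deg + 1) / 2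

/-- The constant polynomial `1`. -/
def one (n : ℕ) : CPoly n where
  coeff := fun p => if p = (0, 0) then 1 else 0
  finite_support := by
    apply Set.Finite.subset (Set.finite_singleton ((0, 0) : Exp n × Exp n))
    intro p hp
    by_contra hne
    simp only [Function.mem_support] at hp
    rw [if_neg (by simpa using hne)] at hp
    exact hp rfl
  herm := by
    rintro ⟨a, b⟩
    have hiff : (((b, a) : Exp n × Exp n) = (0, 0)) ↔ (((a, b) : Exp n × Exp n) = (0, 0)) := by
      constructor <;> · intro h; rw [Prod.ext_iff] at h ⊢; exact ⟨h.2, h.1⟩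
    show (if ((b, a) : Exp n × Exp n) = (0, 0) then (1 : ℂ) else 0)
      = star (if ((a, b) : Exp n × Exp n) = (0, 0) then (1 : ℂ) else 0)
    by_cases h : ((a, b) : Exp n × Exp n) = (0, 0)
    · rw [if_pos (hiff.mpr h), if_pos h]; simp
    · rw [if_neg (fun hc => h (hiff.mp hc)), if_neg h]; simp

end CPoly

/-- Hermitian (pseudo-)moment sequences: `y_{β,γ} = conj (y_{γ,β})`. -/
def IsHermSeq {n : ℕ} (y : Exp n × Exp n → ℂ) : Prop :=
  ∀ p : Exp n × Exp n, y (p.2, p.1) = star (y p)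

/-- The Riesz linear functional `L^c_y(f) = Σ f_{β,γ} y_{β,γ}`. -/
def Lc {n : ℕ} (f : CPoly n) (y : Exp n × Exp n → ℂ) : ℂ :=
  ∑ᶠ p : Exp n × Exp n, f.coeff p * y p

/-- The set `ℕ^n_d` of exponents of degree at most `d`. -/
def degSet (n d : ℕ) : Set (Exp n) := {β | ∑ i, β i ≤ d}

/-- Exponents of degree at most `d` supported on a subset `S` of variables. -/
def degSetI {n : ℕ} (d : ℕ) (S : Set (Fin n)) : Set (Exp n) :=
  {β | (∑ i, β i ≤ d) ∧ ∀ i, β i ≠ 0 → i ∈ S}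

lemma degSetI_finite {n : ℕ} (d : ℕ) (S : Set (Fin n)) : (degSetI d S).Finite := by
  apply Set.Finite.subset (Set.Finite.pi (t := fun _ : Fin n => Set.Iic d)
    (fun _ => Set.finite_Iic d))
  intro β hβ
  simp only [Set.mem_pi, Set.mem_univ, Set.mem_Iic, forall_true_left]
  intro i
  calc β i ≤ ∑ j, β j := Finset.single_le_sum (fun j _ => Nat.zero_le _) (Finset.mem_univ i)
    _ ≤ d := hβ.1

/-- The (finite) index type of a moment/localizing matrix: monomials `β ∈ ℕ^n_d`
supported on the variable set `S`. -/
def MIdx (n d : ℕ) (S : Set (Fin n)) : Type := ↥(degSetI (n := n) d S)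

noncomputable instance {n d : ℕ} {S : Set (Fin n)} : Fintype (MIdx n d S) :=
  (degSetI_finite d S).fintype

instance {n d : ℕ} {S : Set (Fin n)} : DecidableEq (MIdx n d S) :=
  fun a b => Classical.propDecidable _

/-- The complex moment (sub)matrix `M^c_d(y, S)`. -/
def momMat {n : ℕ} (d : ℕ) (S : Set (Fin n)) (y : Exp n × Exp n → ℂ) :
    Matrix (MIdx n d S) (MIdx n d S) ℂ :=
  fun β γ => y (β.1, γ.1)

/-- The complex localizing (sub)matrix `M^c_d(g y, S)`. -/
def locMat {n : ℕ} (g : CPoly n) (d : ℕ) (S : Set (Fin n)) (y : Exp n × Exp n → ℂ) :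
    Matrix (MIdx n d S) (MIdx n d S) ℂ :=
  fun β γ => ∑ᶠ p : Exp n × Exp n, g.coeff p * y (β.1 + p.1, γ.1 + p.2)

/-- The minimum relaxation order `d_min = max{⌈deg f/2⌉, d_1, …, d_m}`. -/
def dminOrd {n m : ℕ} (f : CPoly n) (g : Fin m → CPoly n) : ℕ :=
  max f.halfDeg (Finset.univ.sup fun j => (g j).halfDeg)

/-- Feasible set of the dense complex moment relaxation `(Q_d)`. -/
def denseFeas {n m : ℕ} (f : CPoly n) (g : Fin m → CPoly n) (d : ℕ) :
    Set (Exp n × Exp n → ℂ) :=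
  {y | IsHermSeq y ∧ y (0, 0) = 1 ∧ (momMat d Set.univ y).PosSemidef ∧
    ∀ j : Fin m, (locMat (g j) (d - (g j).halfDeg) Set.univ y).PosSemidef}

/-- `ρ_d`, the optimum of the dense relaxation `(Q_d)` (as an extended real). -/
def denseOpt {n m : ℕ} (f : CPoly n) (g : Fin m → CPoly n) (d : ℕ) : EReal :=
  sInf ((fun y => ((Lc f y).re : EReal)) '' denseFeas f g d)

/- ### Graphs, chordality, sparsity machinery -/

/-- A graph is chordal if every cycle of length at least four has a chord, i.e. an edge of the
graph joining two vertices of the cycle which is not an edge of the cycle. -/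
def IsChordal {V : Type*} (G : SimpleGraph V) : Prop :=
  ∀ ⦃v : V⦄ (w : G.Walk v v), w.IsCycle → 4 ≤ w.length →
    ∃ a b, a ∈ w.support ∧ b ∈ w.support ∧ G.Adj a b ∧ s(a, b) ∉ w.edges

/-- The maximal chordal extension: complete every connected component. -/
def maxChordalExt {V : Type*} (G : SimpleGraph V) : SimpleGraph V :=
  SimpleGraph.fromRel fun a b => G.Reachable a b

/-- The adjacency matrix `B_G` (restricted to the monomial index set `MIdx n d S`),
with ones on the diagonal. -/
def adjB {n : ℕ} (d : ℕ) (S : Set (Fin n)) (G : SimpleGraph (Exp n)) :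
    Matrix (MIdx n d S) (MIdx n d S) ℂ :=
  fun β γ => if β = γ ∨ G.Adj β.1 γ.1 then 1 else 0

/-- Membership in `Π_G(H_+)`: the matrix `M` coincides, on the diagonal and on the edges of
`G`, with some Hermitian positive semidefinite matrix (i.e. `M = Π_G(Q)` for PSD `Q`,
assuming `M` vanishes outside the pattern). -/
def inProjPSD {n : ℕ} (d : ℕ) (S : Set (Fin n)) (G : SimpleGraph (Exp n))
    (M : Matrix (MIdx n d S) (MIdx n d S) ℂ) : Prop :=
  ∃ Q : Matrix (MIdx n d S) (MIdx n d S) ℂ, Q.PosSemidef ∧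
    (fun β γ : MIdx n d S => if β = γ ∨ G.Adj β.1 γ.1 then Q β γ else 0) = M

/-- The `g`-support of a graph `G` with node set `V`:
`supp_g(G) = {(β+β', γ+γ') : β = γ ∈ V or {β,γ} ∈ E(G), (β',γ') ∈ supp(g)}`. -/
def gSupp {n : ℕ} (g : CPoly n) (V : Set (Exp n)) (G : SimpleGraph (Exp n)) :
    Set (Exp n × Exp n) :=
  {q | ∃ β γ p, ((β = γ ∧ β ∈ V) ∨ G.Adj β γ) ∧ p ∈ g.supp ∧ q = (β + p.1, γ + p.2)}

/-- The global support set `𝒜 = supp(f) ∪ ⋃_j supp(g_j)`. -/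
def suppA {n m : ℕ} (f : CPoly n) (g : Fin m → CPoly n) : Set (Exp n × Exp n) :=
  f.supp ∪ ⋃ j : Fin m, (g j).supp

/-- The term sparsity pattern graph on the node set `V` with edges `{β,γ}` for `(β,γ) ∈ A`. -/
def tspGraph {n : ℕ} (A : Set (Exp n × Exp n)) (V : Set (Exp n)) : SimpleGraph (Exp n) :=
  SimpleGraph.fromRel fun β γ => β ∈ V ∧ γ ∈ V ∧ (β, γ) ∈ A

/-- One step of the term sparsity iteration: the graph `F` on node set `V` with edges `{β,γ}`
such that `((β,γ)+supp(g)) ∩ C ≠ ∅`. -/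
def Fstep {n : ℕ} (g : CPoly n) (V : Set (Exp n)) (C : Set (Exp n × Exp n)) :
    SimpleGraph (Exp n) :=
  SimpleGraph.fromRel fun β γ => β ∈ V ∧ γ ∈ V ∧ ∃ p ∈ g.supp, (β + p.1, γ + p.2) ∈ C

/-- `g_0 = 1, g_1, …, g_m`. -/
def gext {n m : ℕ} (g : Fin m → CPoly n) : Fin (m + 1) → CPoly n :=
  Fin.cases (CPoly.one n) g

/-- `d_0 = 0, d_1, …, d_m`. -/
def dje {n m : ℕ} (g : Fin m → CPoly n) : Fin (m + 1) → ℕ :=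
  Fin.cases 0 fun j => (g j).halfDeg

/-- `⋃_{i=0}^m supp_{g_i}(G_i)` for a family of graphs. -/
def tsC {n m : ℕ} (g : Fin m → CPoly n) (d : ℕ)
    (GG : Fin (m + 1) → SimpleGraph (Exp n)) : Set (Exp n × Exp n) :=
  ⋃ i : Fin (m + 1), gSupp (gext g i) (degSet n (d - dje g i)) (GG i)

/-- The family of term sparsity graphs `G^(k)_{d,j}`, built with the chordal extension
operator `CE` (taking the node set and the graph to be extended). -/
def tsFam {n m : ℕ} (f : CPoly n) (g : Fin m → CPoly n)
    (CE : Set (Exp n) → SimpleGraph (Exp n) → SimpleGraph (Exp n)) (d : ℕ) :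
    ℕ → Fin (m + 1) → SimpleGraph (Exp n)
  | 0, j => if j = 0 then tspGraph (suppA f g) (degSet n d) else ⊥
  | k + 1, j =>
      CE (degSet n (d - dje g j))
        (Fstep (gext g j) (degSet n (d - dje g j)) (tsC g d (tsFam f g CE d k)))

/-- Feasible set of the TSSOS relaxation `(Q^ts_{d,k})`. -/
def tsFeas {n m : ℕ} (f : CPoly n) (g : Fin m → CPoly n)
    (CE : Set (Exp n) → SimpleGraph (Exp n) → SimpleGraph (Exp n)) (d k : ℕ) :
    Set (Exp n × Exp n → ℂ) :=
  {y | IsHermSeq y ∧ y (0, 0) = 1 ∧ ∀ j : Fin (m + 1),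
    inProjPSD (d - dje g j) Set.univ (tsFam f g CE d k j)
      (Matrix.hadamard (adjB (d - dje g j) Set.univ (tsFam f g CE d k j))
        (locMat (gext g j) (d - dje g j) Set.univ y))}

/-- `ρ^ts_{d,k}`, the optimum of `(Q^ts_{d,k})`. -/
def tsOpt {n m : ℕ} (f : CPoly n) (g : Fin m → CPoly n)
    (CE : Set (Exp n) → SimpleGraph (Exp n) → SimpleGraph (Exp n)) (d k : ℕ) : EReal :=
  sInf ((fun y => ((Lc f y).re : EReal)) '' tsFeas f g CE d k)

/- ### Sign symmetries -/

/-- The sign symmetries of a set `A ⊆ ℕ^n × ℕ^n`: binary vectors `r ∈ Z_2^n` with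
`rᵀ(β+γ) ≡ 0 (mod 2)` for all `(β,γ) ∈ A`. -/
def signSyms {n : ℕ} (A : Set (Exp n × Exp n)) : Set (Fin n → ZMod 2) :=
  {r | ∀ p ∈ A, ∑ i, r i * ((p.1 i + p.2 i : ℕ) : ZMod 2) = 0}

/- ### Correlative sparsity machinery -/

/-- The variables occurring in a polynomial: `⋃_{(β,γ) ∈ supp g} (supp β ∪ supp γ)`. -/
def varsOf {n : ℕ} (g : CPoly n) : Set (Fin n) :=
  {i | ∃ p ∈ g.supp, p.1 i ≠ 0 ∨ p.2 i ≠ 0}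

/-- The correlative sparsity pattern graph `G^csp` (at relaxation order `d`, with
`J' = {j : d_j = d}`). -/
def cspGraph {n m : ℕ} (f : CPoly n) (g : Fin m → CPoly n) (d : ℕ) : SimpleGraph (Fin n) :=
  SimpleGraph.fromRel fun i i' =>
    (∃ p, (p ∈ f.supp ∨ ∃ j : Fin m, (g j).halfDeg = d ∧ p ∈ (g j).supp) ∧
      (p.1 i ≠ 0 ∨ p.2 i ≠ 0) ∧ (p.1 i' ≠ 0 ∨ p.2 i' ≠ 0)) ∨
    (∃ k : Fin m, (g k).halfDeg ≠ d ∧ i ∈ varsOf (g k) ∧ i' ∈ varsOf (g k))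

/-- `s` is a maximal clique of `G`. -/
def IsMaxClique {V : Type*} (G : SimpleGraph V) (s : Set V) : Prop :=
  G.IsClique s ∧ ∀ t : Set V, G.IsClique t → s ⊆ t → s = t

/-- Feasible set of the correlative sparsity relaxation `(Q^cs_d)` with variable cliques
`I_1, …, I_p`, constraint groups `J_1, …, J_p` and scalarized constraints `J'`. -/
def csFeas {n m p : ℕ} (g : Fin m → CPoly n) (d : ℕ) (I : Fin p → Set (Fin n))
    (J : Fin p → Finset (Fin m)) (J' : Finset (Fin m)) : Set (Exp n × Exp n → ℂ) :=
  {y | IsHermSeq y ∧ y (0, 0) = 1 ∧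
    (∀ l : Fin p, (momMat d (I l) y).PosSemidef) ∧
    (∀ l : Fin p, ∀ j ∈ J l, (locMat (g j) (d - (g j).halfDeg) (I l) y).PosSemidef) ∧
    (∀ j ∈ J', 0 ≤ (Lc (g j) y).re)}

/-- `ρ^cs_d`, the optimum of `(Q^cs_d)`. -/
def csOpt {n m p : ℕ} (f : CPoly n) (g : Fin m → CPoly n) (d : ℕ) (I : Fin p → Set (Fin n))
    (J : Fin p → Finset (Fin m)) (J' : Finset (Fin m)) : EReal :=
  sInf ((fun y => ((Lc f y).re : EReal)) '' csFeas g d I J J')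

/- ### Combined correlative-term sparsity machinery -/

/-- `𝒜_l`: the elements of `A` supported on the variable clique `I_l`. -/
def AlocSet {n : ℕ} (A : Set (Exp n × Exp n)) (I : Set (Fin n)) : Set (Exp n × Exp n) :=
  {q ∈ A | (∀ i, q.1 i ≠ 0 → i ∈ I) ∧ ∀ i, q.2 i ≠ 0 → i ∈ I}

/-- `{0} ∪ J_l` inside `Fin (m+1)`. -/
def Jext {m : ℕ} (Jl : Finset (Fin m)) : Set (Fin (m + 1)) :=
  insert 0 (Fin.succ '' (Jl : Set (Fin m)))

/-- `𝒞^(k)_d = ⋃_l ⋃_{j ∈ {0} ∪ J_l} supp_{g_j}(G^(k)_{d,l,j})`. -/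
def cstsC {n m p : ℕ} (g : Fin m → CPoly n) (d : ℕ) (I : Fin p → Set (Fin n))
    (J : Fin p → Finset (Fin m)) (GG : Fin p → Fin (m + 1) → SimpleGraph (Exp n)) :
    Set (Exp n × Exp n) :=
  ⋃ l : Fin p, ⋃ j ∈ Jext (J l),
    gSupp (gext g j) (degSetI (d - dje g j) (I l)) (GG l j)

/-- The family of correlative-term sparsity graphs `G^(k)_{d,l,j}`, built with the chordal
extension operator `CE`. -/
def cstsFam {n m p : ℕ} (f : CPoly n) (g : Fin m → CPoly n)
    (CE : Set (Exp n) → SimpleGraph (Exp n) → SimpleGraph (Exp n))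
    (I : Fin p → Set (Fin n)) (J : Fin p → Finset (Fin m)) (d : ℕ) :
    ℕ → Fin p → Fin (m + 1) → SimpleGraph (Exp n)
  | 0, l, j => if j = 0 then tspGraph (AlocSet (suppA f g) (I l)) (degSetI d (I l)) else ⊥
  | k + 1, l, j =>
      CE (degSetI (d - dje g j) (I l))
        (Fstep (gext g j) (degSetI (d - dje g j) (I l))
          (cstsC g d I J (cstsFam f g CE I J d k)))

/-- Feasible set of the CS-TSSOS relaxation `(Q^cs-ts_{d,k})`. -/
def cstsFeas {n m p : ℕ} (f : CPoly n) (g : Fin m → CPoly n)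
    (CE : Set (Exp n) → SimpleGraph (Exp n) → SimpleGraph (Exp n))
    (I : Fin p → Set (Fin n)) (J : Fin p → Finset (Fin m)) (J' : Finset (Fin m))
    (d k : ℕ) : Set (Exp n × Exp n → ℂ) :=
  {y | IsHermSeq y ∧ y (0, 0) = 1 ∧
    (∀ l : Fin p, ∀ j ∈ Jext (J l),
      inProjPSD (d - dje g j) (I l) (cstsFam f g CE I J d k l j)
        (Matrix.hadamard (adjB (d - dje g j) (I l) (cstsFam f g CE I J d k l j))
          (locMat (gext g j) (d - dje g j) (I l) y))) ∧
    (∀ j ∈ J', 0 ≤ (Lc (g j) y).re)}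

/-- `ρ^cs-ts_{d,k}`, the optimum of `(Q^cs-ts_{d,k})`. -/
def cstsOpt {n m p : ℕ} (f : CPoly n) (g : Fin m → CPoly n)
    (CE : Set (Exp n) → SimpleGraph (Exp n) → SimpleGraph (Exp n))
    (I : Fin p → Set (Fin n)) (J : Fin p → Finset (Fin m)) (J' : Finset (Fin m))
    (d k : ℕ) : EReal :=
  sInf ((fun y => ((Lc f y).re : EReal)) '' cstsFeas f g CE I J J' d k)


/- ### Auxiliary monotonicity lemmas -/

lemma fromRel_mono' {V : Type*} {r s : V → V → Prop} (h : ∀ a b, r a b → s a b) :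
    SimpleGraph.fromRel r ≤ SimpleGraph.fromRel s := by
  intro a b hab
  rw [SimpleGraph.fromRel_adj] at hab ⊢
  exact ⟨hab.1, hab.2.elim (fun h' => Or.inl (h _ _ h')) (fun h' => Or.inr (h _ _ h'))⟩

lemma degSet_mono {n : ℕ} {d d' : ℕ} (h : d ≤ d') : degSet n d ⊆ degSet n d' :=
  fun _ hβ => le_trans hβ h

lemma gSupp_mono {n : ℕ} (g : CPoly n) {V V' : Set (Exp n)}
    {G G' : SimpleGraph (Exp n)} (hV : V ⊆ V') (hG : G ≤ G') :
    gSupp g V G ⊆ gSupp g V' G' := by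
  rintro q ⟨β, γ, p, h1, h2, h3⟩
  exact ⟨β, γ, p, h1.elim (fun h => Or.inl ⟨h.1, hV h.2⟩) (fun h => Or.inr (hG h)), h2, h3⟩

lemma tsC_mono {n m : ℕ} (g : Fin m → CPoly n) {d d' : ℕ} (hd : d ≤ d')
    {GG GG' : Fin (m + 1) → SimpleGraph (Exp n)} (hGG : ∀ i, GG i ≤ GG' i) :
    tsC g d GG ⊆ tsC g d' GG' := by
  intro q hq
  rw [tsC, Set.mem_iUnion] at hq ⊢
  obtain ⟨i, hi⟩ := hq
  exact ⟨i, gSupp_mono _ (degSet_mono (Nat.sub_le_sub_right hd _)) (hGG i) hi⟩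

lemma Fstep_mono {n : ℕ} (g : CPoly n) {V V' : Set (Exp n)}
    {C C' : Set (Exp n × Exp n)} (hV : V ⊆ V') (hC : C ⊆ C') :
    Fstep g V C ≤ Fstep g V' C' := by
  apply fromRel_mono'
  rintro a b ⟨h1, h2, p, hp, hpc⟩
  exact ⟨hV h1, hV h2, p, hp, hC hpc⟩

lemma tsFam_mono {n m : ℕ} (f : CPoly n) (g : Fin m → CPoly n)
    (CE : Set (Exp n) → SimpleGraph (Exp n) → SimpleGraph (Exp n))
    (hCE_mono : ∀ (V₁ V₂ : Set (Exp n)) (G₁ G₂ : SimpleGraph (Exp n)),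
      V₁ ⊆ V₂ → G₁ ≤ G₂ → CE V₁ G₁ ≤ CE V₂ G₂)
    (d : ℕ) : ∀ (k : ℕ) (j : Fin (m + 1)),
      tsFam f g CE d k j ≤ tsFam f g CE (d + 1) k j := by
  intro k
  induction k with
  | zero =>
      intro j
      by_cases hj : j = 0
      · simp only [tsFam, hj, if_pos rfl]
        apply fromRel_mono'
        rintro a b ⟨h1, h2, h3⟩
        exact ⟨degSet_mono (Nat.le_succ d) h1, degSet_mono (Nat.le_succ d) h2, h3⟩
      · simp only [tsFam, if_neg hj]
        exact bot_le
  | succ k ih =>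
      intro j
      exact hCE_mono _ _ _ _ (degSet_mono (Nat.sub_le_sub_right (Nat.le_succ d) _))
        (Fstep_mono _ (degSet_mono (Nat.sub_le_sub_right (Nat.le_succ d) _))
          (tsC_mono g (Nat.le_succ d) ih))

lemma tsFeas_antitone {n m : ℕ} (f : CPoly n) (g : Fin m → CPoly n)
    (CE : Set (Exp n) → SimpleGraph (Exp n) → SimpleGraph (Exp n))
    (hCE_mono : ∀ (V₁ V₂ : Set (Exp n)) (G₁ G₂ : SimpleGraph (Exp n)),
      V₁ ⊆ V₂ → G₁ ≤ G₂ → CE V₁ G₁ ≤ CE V₂ G₂)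
    (d k : ℕ) : tsFeas f g CE (d + 1) k ⊆ tsFeas f g CE d k := by
  rintro y ⟨hherm, h00, hj⟩
  refine ⟨hherm, h00, fun j => ?_⟩
  obtain ⟨Q', hQ'psd, hQ'eq⟩ := hj j
  -- embedding of index sets
  let e : MIdx n (d - dje g j) Set.univ → MIdx n (d + 1 - dje g j) Set.univ :=
    fun β => ⟨β.1, le_trans β.2.1 (Nat.sub_le_sub_right (Nat.le_succ d) _), β.2.2⟩
  refine ⟨Q'.submatrix e e, hQ'psd.submatrix e, ?_⟩
  funext β γ
  have hloc : locMat (gext g j) (d + 1 - dje g j) Set.univ y (e β) (e γ)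
      = locMat (gext g j) (d - dje g j) Set.univ y β γ := rfl
  by_cases h : β = γ ∨ (tsFam f g CE d k j).Adj β.1 γ.1
  · have h' : e β = e γ ∨ (tsFam f g CE (d + 1) k j).Adj (e β).1 (e γ).1 := by
      rcases h with h | h
      · exact Or.inl (congrArg e h)
      · exact Or.inr (tsFam_mono f g CE hCE_mono d k j h)
    have key := congrFun (congrFun hQ'eq (e β)) (e γ)
    rw [if_pos h'] at key
    have hadj : adjB (d + 1 - dje g j) Set.univ (tsFam f g CE (d + 1) k j) (e β) (e γ)
        = 1 := if_pos h'
    rw [if_pos h]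
    calc Q'.submatrix e e β γ = Q' (e β) (e γ) := rfl
      _ = Matrix.hadamard (adjB (d + 1 - dje g j) Set.univ (tsFam f g CE (d + 1) k j))
            (locMat (gext g j) (d + 1 - dje g j) Set.univ y) (e β) (e γ) := key
      _ = Matrix.hadamard (adjB (d - dje g j) Set.univ (tsFam f g CE d k j))
            (locMat (gext g j) (d - dje g j) Set.univ y) β γ := by
          rw [Matrix.hadamard_apply, Matrix.hadamard_apply, hadj, hloc]
          show (1 : ℂ) * _ = _ * _
          rw [one_mul]
          have : adjB (d - dje g j) Set.univ (tsFam f g CE d k j) β γ = 1 := if_pos h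
          rw [this, one_mul]
  · rw [if_neg h]
    have : adjB (d - dje g j) Set.univ (tsFam f g CE d k j) β γ = 0 := if_neg h
    rw [Matrix.hadamard_apply, this, zero_mul]

/-- **Theorem (TSSOS hierarchy, monotonicity in the relaxation order).**
Fix a sparse order `k ≥ 1`. The sequence `(ρ^ts_(d,k))_(d ≥ d_min)` is monotone
nondecreasing in `d`. -/
theorem ts_mono_relaxation_order {n m : ℕ} (f : CPoly n) (g : Fin m → CPoly n)
    (CE : Set (Exp n) → SimpleGraph (Exp n) → SimpleGraph (Exp n))
    (hCE_le : ∀ (V : Set (Exp n)) (G : SimpleGraph (Exp n)), G ≤ CE V G)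
    (hCE_chordal : ∀ (V : Set (Exp n)) (G : SimpleGraph (Exp n)), IsChordal (CE V G))
    (hCE_supp : ∀ (V : Set (Exp n)) (G : SimpleGraph (Exp n)),
      (∀ a b, G.Adj a b → a ∈ V ∧ b ∈ V) → ∀ a b, (CE V G).Adj a b → a ∈ V ∧ b ∈ V)
    (hCE_mono : ∀ (V₁ V₂ : Set (Exp n)) (G₁ G₂ : SimpleGraph (Exp n)),
      V₁ ⊆ V₂ → G₁ ≤ G₂ → CE V₁ G₁ ≤ CE V₂ G₂)
    (k : ℕ) (hk : 1 ≤ k) :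
    ∀ d : ℕ, dminOrd f g ≤ d → tsOpt f g CE d k ≤ tsOpt f g CE (d + 1) k := by
  intro d _
  exact sInf_le_sInf (Set.image_mono (tsFeas_antitone f g CE hCE_mono d k))

end
end

section
/- If the CPOP is a quadratically constrained quadratic program (i.e., f and all g_j have degree at most 2, so d_min = 1), then the term-sparsity-adapted complex moment relaxation at relaxation order 1 and sparse order 1, (Q^ts_{1,1}), and the dense first-order complex moment relaxation (Q_1) have the same optimum: ρ^ts_{1,1} = ρ_1. -/
open scoped BigOperators ComplexOrder

attribute [local instance] Classical.propDecidable

noncomputable section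

section AuxProof

variable {n m : ℕ}

lemma locMat_one (d : ℕ) (S : Set (Fin n)) (y : Exp n × Exp n → ℂ) :
    locMat (CPoly.one n) d S y = momMat d S y := by
  funext β γ
  show (∑ᶠ p : Exp n × Exp n, (CPoly.one n).coeff p * y (β.1 + p.1, γ.1 + p.2)) = y (β.1, γ.1)
  rw [finsum_eq_single _ ((0, 0) : Exp n × Exp n)]
  · simp [CPoly.one]
  · intro q hq
    show ((if q = ((0, 0) : Exp n × Exp n) then (1 : ℂ) else 0) * y (β.1 + q.1, γ.1 + q.2)) = 0
    rw [if_neg hq, zero_mul]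

lemma inProjPSD_of_psd {d : ℕ} {S : Set (Fin n)} {G : SimpleGraph (Exp n)}
    {M : Matrix (MIdx n d S) (MIdx n d S) ℂ} (h : M.PosSemidef) :
    inProjPSD d S G (Matrix.hadamard (adjB d S G) M) := by
  refine ⟨M, h, ?_⟩
  funext β γ
  simp only [Matrix.hadamard_apply, adjB]
  by_cases hc : β = γ ∨ G.Adj β.1 γ.1 <;> simp [hc]

lemma psd_diag_nonneg {k : Type*} [Fintype k] [DecidableEq k] {M : Matrix k k ℂ}
    (h : M.PosSemidef) (i : k) : 0 ≤ M i i := by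
  have := h.dotProduct_mulVec_nonneg (Pi.single i 1)
  simpa [Matrix.mulVec_single, dotProduct, Pi.single_apply] using this

lemma psd_smul {k : Type*} [Fintype k] {M : Matrix k k ℂ} (h : M.PosSemidef)
    {c : ℂ} (hc : 0 ≤ c) : (c • M).PosSemidef := by
  refine Matrix.PosSemidef.of_dotProduct_mulVec_nonneg ?_ ?_
  · unfold Matrix.IsHermitian
    rw [Matrix.conjTranspose_smul, h.1]
    congr 1
    rw [Complex.star_def, Complex.conj_eq_iff_im]
    exact ((Complex.nonneg_iff).mp hc).2.symm
  · intro x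
    rw [Matrix.smul_mulVec, dotProduct_smul, smul_eq_mul]
    exact mul_nonneg hc (h.dotProduct_mulVec_nonneg x)

lemma midx_zero_val {S : Set (Fin n)} (β : MIdx n 0 S) : β.1 = 0 := by
  funext i
  have h : ∑ i, β.1 i = 0 := Nat.le_zero.mp β.2.1
  exact Finset.sum_eq_zero_iff.mp h i (Finset.mem_univ i)

/-- The distinguished element of `MIdx n 0 S`. -/
def midxZero (S : Set (Fin n)) : MIdx n 0 S :=
  ⟨0, by simp, fun i hi => absurd rfl hi⟩

lemma midx_zero_eq {S : Set (Fin n)} (β : MIdx n 0 S) : β = midxZero S :=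
  Subtype.ext (midx_zero_val β)

/-- Make an element of `MIdx n 1 Set.univ`. -/
def mk1 (β : Exp n) (h : ∑ i, β i ≤ 1) : MIdx n 1 (Set.univ : Set (Fin n)) :=
  ⟨β, h, fun i _ => Set.mem_univ i⟩

/-- The off-diagonal pattern of the first-order moment matrix. -/
def PatP {n : ℕ} (p : Exp n × Exp n) : Prop :=
  p.1 ≠ p.2 ∧ (∑ i, p.1 i) ≤ 1 ∧ (∑ i, p.2 i) ≤ 1

/-- The completed moment sequence obtained from the PSD certificate `Q`. -/
def completedSeq (Q : Matrix (MIdx n 1 (Set.univ : Set (Fin n)))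
    (MIdx n 1 (Set.univ : Set (Fin n))) ℂ) (y : Exp n × Exp n → ℂ) :
    Exp n × Exp n → ℂ :=
  fun p => if h : PatP p then Q (mk1 p.1 h.2.1) (mk1 p.2 h.2.2) else y p

lemma completedSeq_pos (Q : Matrix (MIdx n 1 (Set.univ : Set (Fin n)))
    (MIdx n 1 (Set.univ : Set (Fin n))) ℂ) (y : Exp n × Exp n → ℂ)
    {p : Exp n × Exp n} (h : PatP p) :
    completedSeq Q y p = Q (mk1 p.1 h.2.1) (mk1 p.2 h.2.2) := dif_pos h

lemma completedSeq_neg (Q : Matrix (MIdx n 1 (Set.univ : Set (Fin n)))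
    (MIdx n 1 (Set.univ : Set (Fin n))) ℂ) (y : Exp n × Exp n → ℂ)
    {p : Exp n × Exp n} (h : ¬ PatP p) :
    completedSeq Q y p = y p := dif_neg h

lemma supp_of_halfDeg_zero {g : CPoly n} (h : g.halfDeg = 0) :
    g.supp ⊆ {((0, 0) : Exp n × Exp n)} := by
  intro p hp
  have hdeg : g.deg = 0 := by
    have := h
    unfold CPoly.halfDeg at this
    omega
  have hb : BddAbove ((fun p : Exp n × Exp n => (∑ i, p.1 i) + ∑ i, p.2 i) '' g.supp) :=
    ((g.finite_support.image _).bddAbove)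
  have hle : (∑ i, p.1 i) + ∑ i, p.2 i ≤ g.deg :=
    le_csSup hb (Set.mem_image_of_mem _ hp)
  rw [hdeg] at hle
  have h1 : ∑ i, p.1 i = 0 := by omega
  have h2 : ∑ i, p.2 i = 0 := by omega
  have e1 : p.1 = 0 := funext fun i => Finset.sum_eq_zero_iff.mp h1 i (Finset.mem_univ i)
  have e2 : p.2 = 0 := funext fun i => Finset.sum_eq_zero_iff.mp h2 i (Finset.mem_univ i)
  show p = (0, 0)
  exact Prod.ext e1 e2

end AuxProof

/-- **Proposition (QCQP: TSSOS relaxation at `(d,k) = (1,1)` is exact w.r.t. the dense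
first-order relaxation).** If the CPOP is a QCQP (all degrees at most `2`, so `d_min = 1`),
then `ρ^ts_(1,1) = ρ_1`. -/
theorem ts_first_order_eq_dense {n m : ℕ} (f : CPoly n) (g : Fin m → CPoly n)
    (hf2 : f.deg ≤ 2) (hg2 : ∀ j : Fin m, (g j).deg ≤ 2) (hdmin : dminOrd f g = 1)
    (CE : Set (Exp n) → SimpleGraph (Exp n) → SimpleGraph (Exp n))
    (hCE_le : ∀ (V : Set (Exp n)) (G : SimpleGraph (Exp n)), G ≤ CE V G)
    (hCE_chordal : ∀ (V : Set (Exp n)) (G : SimpleGraph (Exp n)), IsChordal (CE V G))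
    (hCE_supp : ∀ (V : Set (Exp n)) (G : SimpleGraph (Exp n)),
      (∀ a b, G.Adj a b → a ∈ V ∧ b ∈ V) → ∀ a b, (CE V G).Adj a b → a ∈ V ∧ b ∈ V) :
    tsOpt f g CE 1 1 = denseOpt f g 1 := by
  classical
  -- Easy inclusion: dense-feasible points are ts-feasible.
  have hDT : denseFeas f g 1 ⊆ tsFeas f g CE 1 1 := by
    rintro y ⟨hherm, h1, hmom, hloc⟩
    refine ⟨hherm, h1, ?_⟩
    intro j
    induction j using Fin.cases with
    | zero =>
        have hpsd : (locMat (CPoly.one n) 1 Set.univ y).PosSemidef := by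
          rw [locMat_one]; exact hmom
        exact inProjPSD_of_psd hpsd
    | succ i =>
        exact inProjPSD_of_psd (hloc i)
  -- Hard inclusion: every ts-feasible point yields a dense-feasible point with the
  -- same objective value.
  have hTD : ∀ y ∈ tsFeas f g CE 1 1, ∃ y' ∈ denseFeas f g 1, Lc f y' = Lc f y := by
    rintro y ⟨hherm, h1, hcons⟩
    set G₀ : SimpleGraph (Exp n) := tsFam f g CE 1 1 0 with hG₀
    -- the `j = 0` constraint
    have hc0 : inProjPSD 1 Set.univ G₀
        (Matrix.hadamard (adjB 1 Set.univ G₀) (locMat (CPoly.one n) 1 Set.univ y)) :=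
      hcons 0
    obtain ⟨Q, hQ, hpat⟩ := hc0
    -- pattern facts about Q
    have hQdiag : ∀ β : MIdx n 1 (Set.univ : Set (Fin n)), Q β β = y (β.1, β.1) := by
      intro β
      have h := congrFun (congrFun hpat β) β
      rw [if_pos (Or.inl rfl)] at h
      rw [h, Matrix.hadamard_apply, locMat_one]
      show adjB 1 Set.univ G₀ β β * y (β.1, β.1) = y (β.1, β.1)
      rw [show adjB 1 Set.univ G₀ β β = 1 from if_pos (Or.inl rfl), one_mul]
    have hQadj : ∀ β γ : MIdx n 1 (Set.univ : Set (Fin n)),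
        G₀.Adj β.1 γ.1 → Q β γ = y (β.1, γ.1) := by
      intro β γ hadj
      have h := congrFun (congrFun hpat β) γ
      rw [if_pos (Or.inr hadj)] at h
      rw [h, Matrix.hadamard_apply, locMat_one]
      show adjB 1 Set.univ G₀ β γ * y (β.1, γ.1) = y (β.1, γ.1)
      rw [show adjB 1 Set.univ G₀ β γ = 1 from if_pos (Or.inr hadj), one_mul]
    -- adjacency of G₀ on the global support
    have hadjA : ∀ p : Exp n × Exp n, p ∈ suppA f g → p.1 ≠ p.2 →
        (∑ i, p.1 i) ≤ 1 → (∑ i, p.2 i) ≤ 1 → G₀.Adj p.1 p.2 := by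
      intro p hpA hne hd1 hd2
      have hfam0 : tsFam f g CE 1 0 0 = tspGraph (suppA f g) (degSet n 1) := by
        show (if (0 : Fin (m + 1)) = 0 then tspGraph (suppA f g) (degSet n 1) else ⊥)
          = tspGraph (suppA f g) (degSet n 1)
        rw [if_pos rfl]
      have htsp : (tspGraph (suppA f g) (degSet n 1)).Adj p.1 p.2 := by
        rw [tspGraph, SimpleGraph.fromRel_adj]
        exact ⟨hne, Or.inl ⟨hd1, hd2, by rw [Prod.mk.eta]; exact hpA⟩⟩
      have hmemC : p ∈ tsC g 1 (tsFam f g CE 1 0) := by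
        rw [tsC, Set.mem_iUnion]
        refine ⟨0, ?_⟩
        rw [hfam0]
        refine ⟨p.1, p.2, ((0, 0) : Exp n × Exp n), Or.inr htsp, ?_, ?_⟩
        · show (CPoly.one n).coeff (0, 0) ≠ 0
          rw [show (CPoly.one n).coeff (0, 0) = 1 from if_pos rfl]
          exact one_ne_zero
        · show p = (p.1 + 0, p.2 + 0)
          rw [add_zero, add_zero, Prod.mk.eta]
      have hF : (Fstep (gext g 0) (degSet n (1 - dje g 0))
          (tsC g 1 (tsFam f g CE 1 0))).Adj p.1 p.2 := by
        rw [Fstep, SimpleGraph.fromRel_adj]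
        refine ⟨hne, Or.inl ⟨hd1, hd2, ((0, 0) : Exp n × Exp n), ?_, ?_⟩⟩
        · show (CPoly.one n).coeff (0, 0) ≠ 0
          rw [show (CPoly.one n).coeff (0, 0) = 1 from if_pos rfl]
          exact one_ne_zero
        · show (p.1 + 0, p.2 + 0) ∈ tsC g 1 (tsFam f g CE 1 0)
          rw [add_zero, add_zero, Prod.mk.eta]
          exact hmemC
      exact hCE_le _ _ hF
    -- the completed sequence
    set y' : Exp n × Exp n → ℂ := completedSeq Q y with hy'
    have hagree : ∀ p ∈ suppA f g, y' p = y p := by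
      intro p hp
      rw [hy']
      by_cases h : PatP p
      · rw [completedSeq_pos Q y h, hQadj _ _ (hadjA p hp h.1 h.2.1 h.2.2)]
        show y (p.1, p.2) = y p
        rw [Prod.mk.eta]
      · exact completedSeq_neg Q y h
    have hherm' : IsHermSeq y' := by
      intro p
      show completedSeq Q y (p.2, p.1) = star (completedSeq Q y p)
      by_cases h : PatP p
      · have hs : PatP (p.2, p.1) := ⟨Ne.symm h.1, h.2.2, h.2.1⟩
        rw [completedSeq_pos Q y hs, completedSeq_pos Q y h]
        exact (hQ.1.apply _ _).symm
      · have hs : ¬ PatP (p.2, p.1) := fun hc => h ⟨Ne.symm hc.1, hc.2.2, hc.2.1⟩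
        rw [completedSeq_neg Q y hs, completedSeq_neg Q y h]
        exact hherm p
    have h1' : y' (0, 0) = 1 := by
      rw [hy', completedSeq_neg Q y (fun hc => hc.1 rfl)]
      exact h1
    have hmom' : momMat 1 Set.univ y' = Q := by
      funext β γ
      rw [hy']
      show completedSeq Q y (β.1, γ.1) = Q β γ
      by_cases hbg : β.1 = γ.1
      · have hβγ : β = γ := Subtype.ext hbg
        subst hβγ
        rw [completedSeq_neg Q y (fun hc => hc.1 rfl)]
        exact (hQdiag β).symm
      · have hp : PatP ((β.1, γ.1) : Exp n × Exp n) := ⟨hbg, β.2.1, γ.2.1⟩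
        rw [completedSeq_pos Q y hp]
        rw [show mk1 (β.1, γ.1).1 hp.2.1 = β from Subtype.ext rfl,
          show mk1 (β.1, γ.1).2 hp.2.2 = γ from Subtype.ext rfl]
    -- objective values agree
    have hLc : Lc f y' = Lc f y := by
      unfold Lc
      apply finsum_congr
      intro p
      by_cases hp : f.coeff p = 0
      · rw [hp, zero_mul, zero_mul]
      · rw [hagree p (Set.mem_union_left _ hp)]
    refine ⟨y', ⟨hherm', h1', ?_, ?_⟩, hLc⟩
    · rw [hmom']
      exact hQ
    · -- localizing constraints
      intro j
      have hsuppj : ∀ p ∈ (g j).supp, p ∈ suppA f g := fun p hp =>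
        Set.mem_union_right _ (Set.mem_iUnion.mpr ⟨j, hp⟩)
      have hhalf : (g j).halfDeg ≤ 1 := by
        have := hg2 j
        unfold CPoly.halfDeg
        omega
      have hc : inProjPSD (1 - (g j).halfDeg) Set.univ (tsFam f g CE 1 1 j.succ)
          (Matrix.hadamard (adjB (1 - (g j).halfDeg) Set.univ (tsFam f g CE 1 1 j.succ))
            (locMat (g j) (1 - (g j).halfDeg) Set.univ y)) := hcons j.succ
      rcases Nat.le_one_iff_eq_zero_or_eq_one.mp hhalf with hd0 | hd1
      · -- constant constraint: `g j` is supported at `(0,0)`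
        have hsupp0 : (g j).supp ⊆ {((0, 0) : Exp n × Exp n)} := supp_of_halfDeg_zero hd0
        have hcz : ∀ q : Exp n × Exp n, q ≠ (0, 0) → (g j).coeff q = 0 := by
          intro q hq
          by_contra hne
          exact hq (hsupp0 hne)
        rw [hd0]
        by_cases hz : (g j).coeff (0, 0) = 0
        · have hzero : locMat (g j) (1 - 0) Set.univ y' = 0 := by
            funext β γ
            show (∑ᶠ q : Exp n × Exp n, (g j).coeff q * y' (β.1 + q.1, γ.1 + q.2))
              = (0 : Matrix _ _ ℂ) β γ
            rw [Matrix.zero_apply]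
            apply finsum_eq_zero_of_forall_eq_zero
            intro q
            by_cases hq : q = (0, 0)
            · rw [hq, hz, zero_mul]
            · rw [hcz q hq, zero_mul]
          rw [hzero]
          exact Matrix.PosSemidef.zero
        · set c : ℂ := (g j).coeff (0, 0) with hcdef
          have hlocconst : ∀ (w : Exp n × Exp n → ℂ)
              (β γ : MIdx n 1 (Set.univ : Set (Fin n))),
              locMat (g j) 1 Set.univ w β γ = c * w (β.1, γ.1) := by
            intro w β γ
            show (∑ᶠ q : Exp n × Exp n, (g j).coeff q * w (β.1 + q.1, γ.1 + q.2))
              = c * w (β.1, γ.1)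
            rw [finsum_eq_single _ ((0, 0) : Exp n × Exp n)]
            · show (g j).coeff (0, 0) * w (β.1 + 0, γ.1 + 0) = c * w (β.1, γ.1)
              rw [add_zero, add_zero]
            · intro q hq
              rw [hcz q hq, zero_mul]
          rw [hd0] at hc
          obtain ⟨Q'', hQ'', hpat''⟩ := hc
          have he : (mk1 (0 : Exp n) (by simp) : MIdx n 1 (Set.univ : Set (Fin n)))
              = (mk1 (0 : Exp n) (by simp)) := rfl
          set e : MIdx n 1 (Set.univ : Set (Fin n)) := mk1 (0 : Exp n) (by simp) with hedef
          have hcn : 0 ≤ c := by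
            have h := congrFun (congrFun hpat'' e) e
            rw [if_pos (Or.inl rfl)] at h
            have hd : 0 ≤ Q'' e e := psd_diag_nonneg hQ'' e
            rw [h, Matrix.hadamard_apply] at hd
            have hadj1 : adjB (1 - 0) Set.univ (tsFam f g CE 1 1 j.succ) e e = 1 :=
              if_pos (Or.inl rfl)
            rw [hadj1, one_mul] at hd
            have hloce : locMat (g j) (1 - 0) Set.univ y e e = c := by
              have := hlocconst y e e
              rw [show y ((e.1 : Exp n), (e.1 : Exp n)) = 1 from h1, mul_one] at this
              exact this
            rwa [hloce] at hd
          have hsmul : locMat (g j) (1 - 0) Set.univ y' = c • Q := by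
            funext β γ
            rw [show locMat (g j) (1 - 0) Set.univ y' β γ
                = locMat (g j) 1 Set.univ y' β γ from rfl, hlocconst y' β γ]
            show c * y' (β.1, γ.1) = (c • Q) β γ
            rw [Matrix.smul_apply, smul_eq_mul]
            congr 1
            exact congrFun (congrFun hmom' β) γ
          rw [hsmul]
          exact psd_smul hQ hcn
      · -- genuine constraint: `d_j = 1`, 1×1 matrix
        rw [hd1] at hc ⊢
        obtain ⟨Q', hQ', hpat'⟩ := hc
        set z : MIdx n 0 (Set.univ : Set (Fin n)) := midxZero Set.univ with hzdef
        have hQ'M : locMat (g j) (1 - 1) Set.univ y = Q' := by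
          funext β γ
          rw [midx_zero_eq β, midx_zero_eq γ]
          have h := congrFun (congrFun hpat' z) z
          rw [if_pos (Or.inl rfl), Matrix.hadamard_apply,
            show ∀ β, adjB (1 - 1) Set.univ (tsFam f g CE 1 1 j.succ) β β = 1
              from fun β => if_pos (Or.inl rfl), one_mul] at h
          exact h.symm
        have hloceq : locMat (g j) (1 - 1) Set.univ y' = locMat (g j) (1 - 1) Set.univ y := by
          funext β γ
          show (∑ᶠ q : Exp n × Exp n, (g j).coeff q * y' (β.1 + q.1, γ.1 + q.2))
            = ∑ᶠ q : Exp n × Exp n, (g j).coeff q * y (β.1 + q.1, γ.1 + q.2)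
          apply finsum_congr
          intro q
          by_cases hq : (g j).coeff q = 0
          · rw [hq, zero_mul, zero_mul]
          · congr 1
            rw [midx_zero_val β, midx_zero_val γ, zero_add, zero_add, Prod.mk.eta]
            exact hagree q (hsuppj q hq)
        rw [hloceq, hQ'M]
        exact hQ'
  -- conclude
  apply le_antisymm
  · apply sInf_le_sInf
    exact Set.image_mono hDT
  · apply sInf_le_sInf
    rintro v ⟨y, hy, rfl⟩
    obtain ⟨y', hy', hLc⟩ := hTD y hy
    refine ⟨y', hy', ?_⟩
    show ((Lc f y').re : EReal) = ((Lc f y).re : EReal)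
    rw [hLc]


end
end
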